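/- Let n ≥ 1, let A = (a_ij) be a positive n×n reciprocal matrix, and let x = (x_j) be a positive vector in ℝⁿ. Then x minimizes the function x ↦ Σ_{1≤i,j≤n} (log a_ij − log(x_i/x_j))² over all positive vectors if and only if there exists u > 0 such that x_i = u · (∏_{j=1}^n a_ij)^{1/n} for all i. -/

import Mathlib

/-- Geometric mean method: a positive vector `x` minimizes the log-Euclidean
approximation error for a positive reciprocal matrix `A` iff it is a positive
multiple of the vector of geometric means of the rows of `A`. -/
theorem geometric_mean_minimizes_logEuclidean
    (n : ℕ) (hn : 1 ≤ n) (A : Matrix (Fin n) (Fin n) ℝ)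
    (hpos : ∀ i j, 0 < A i j)
    (hrec : ∀ i j, A i j * A j i = 1)
    (x : Fin n → ℝ) (hx : ∀ j, 0 < x j) :
    (∀ y : Fin n → ℝ, (∀ j, 0 < y j) →
        (∑ i, ∑ j, (Real.log (A i j) - Real.log (x i / x j)) ^ 2) ≤
          ∑ i, ∑ j, (Real.log (A i j) - Real.log (y i / y j)) ^ 2) ↔
      ∃ u : ℝ, 0 < u ∧ ∀ i, x i = u * (∏ j, A i j) ^ ((n : ℝ)⁻¹) := by
  have hn0 : (n : ℝ) ≠ 0 := Nat.cast_ne_zero.mpr (by omega)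
  set L : Fin n → Fin n → ℝ := fun i j => Real.log (A i j) with hLdef
  have hLa : ∀ i j, L i j + L j i = 0 := by
    intro i j
    have h1 : Real.log (A i j * A j i) = 0 := by rw [hrec i j, Real.log_one]
    rw [Real.log_mul (hpos i j).ne' (hpos j i).ne'] at h1
    simpa [hLdef] using h1
  set m : Fin n → ℝ := fun i => (n : ℝ)⁻¹ * ∑ j, L i j with hmdef
  have hrow : ∀ i, ∑ j, L i j = (n : ℝ) * m i := by
    intro i; simp only [hmdef]; field_simp
  have hcol : ∀ j, ∑ i, L i j = -((n : ℝ) * m j) := by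
    intro j
    have : ∑ i, L i j = ∑ i, -(L j i) := by
      apply Finset.sum_congr rfl; intro i _; linarith [hLa j i]
    rw [this, Finset.sum_neg_distrib, hrow j]
  have hmsum : ∑ i, m i = 0 := by
    have hS : ∑ i, ∑ j, L i j = 0 := by
      have h1 : ∑ i, ∑ j, L i j = ∑ j, ∑ i, L i j := Finset.sum_comm
      have h2 : ∑ j, ∑ i, L i j = ∑ j, -((n:ℝ) * m j) := by
        apply Finset.sum_congr rfl; intro j _; exact hcol j
      have h3 : ∑ i, ∑ j, L i j = ∑ i, (n:ℝ) * m i := by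
        apply Finset.sum_congr rfl; intro i _; exact hrow i
      rw [h2] at h1
      simp only [Finset.sum_neg_distrib] at h1
      rw [h3] at h1 ⊢
      linarith
    have h3 : ∑ i, ∑ j, L i j = ∑ i, (n:ℝ) * m i := by
      apply Finset.sum_congr rfl; intro i _; exact hrow i
    rw [h3, ← Finset.mul_sum] at hS
    exact (mul_eq_zero.mp hS).resolve_left hn0
  have hconst : ∀ c : ℝ, ∑ _j : Fin n, c = (n : ℝ) * c := by
    intro c; simp [Finset.sum_const, Finset.card_univ, mul_comm]
  have hE1 : ∀ i, ∑ j, (L i j - (m i - m j)) = 0 := by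
    intro i
    rw [Finset.sum_sub_distrib, Finset.sum_sub_distrib, hrow i, hconst, hmsum]
    ring
  have hE2 : ∀ j, ∑ i, (L i j - (m i - m j)) = 0 := by
    intro j
    rw [Finset.sum_sub_distrib, Finset.sum_sub_distrib, hcol j, hmsum, hconst]
    ring
  have key : ∀ w : Fin n → ℝ,
      ∑ i, ∑ j, (L i j - (w i - w j)) ^ 2
        = (∑ i, ∑ j, (L i j - (m i - m j)) ^ 2)
          + ∑ i, ∑ j, ((w i - m i) - (w j - m j)) ^ 2 := by
    intro w
    have cross : ∑ i, ∑ j, (L i j - (m i - m j)) * ((w i - m i) - (w j - m j)) = 0 := by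
      have e : ∀ i j : Fin n, (L i j - (m i - m j)) * ((w i - m i) - (w j - m j))
          = (L i j - (m i - m j)) * (w i - m i)
            - (L i j - (m i - m j)) * (w j - m j) := by intros; ring
      simp only [e, Finset.sum_sub_distrib]
      have t1 : ∑ i, ∑ j, (L i j - (m i - m j)) * (w i - m i) = 0 := by
        apply Finset.sum_eq_zero; intro i _
        have : ∑ j, (L i j - (m i - m j)) * (w i - m i)
            = (∑ j, (L i j - (m i - m j))) * (w i - m i) := by
          rw [Finset.sum_mul]
        rw [this, hE1 i, zero_mul]
      have t2 : ∑ i, ∑ j, (L i j - (m i - m j)) * (w j - m j) = 0 := by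
        rw [Finset.sum_comm]
        apply Finset.sum_eq_zero; intro j _
        have : ∑ i, (L i j - (m i - m j)) * (w j - m j)
            = (∑ i, (L i j - (m i - m j))) * (w j - m j) := by
          rw [Finset.sum_mul]
        rw [this, hE2 j, zero_mul]
      rw [t1, t2, sub_zero]
    have e2 : ∀ i j : Fin n, (L i j - (w i - w j)) ^ 2
        = (L i j - (m i - m j)) ^ 2 + ((w i - m i) - (w j - m j)) ^ 2
          - 2 * ((L i j - (m i - m j)) * ((w i - m i) - (w j - m j))) := by
      intros; ring
    simp only [e2, Finset.sum_sub_distrib, Finset.sum_add_distrib, ← Finset.mul_sum]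
    rw [cross]
    ring
  -- rewrite objective in terms of logs
  have glog : ∀ y : Fin n → ℝ, (∀ j, 0 < y j) →
      ∑ i, ∑ j, (Real.log (A i j) - Real.log (y i / y j)) ^ 2
        = ∑ i, ∑ j, (L i j - (Real.log (y i) - Real.log (y j))) ^ 2 := by
    intro y hy
    apply Finset.sum_congr rfl; intro i _
    apply Finset.sum_congr rfl; intro j _
    rw [Real.log_div (hy i).ne' (hy j).ne']
  have hexp : ∀ i, Real.exp (m i) = (∏ j, A i j) ^ ((n : ℝ)⁻¹) := by
    intro i
    have hp : 0 < ∏ j, A i j := Finset.prod_pos (fun j _ => hpos i j)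
    rw [Real.rpow_def_of_pos hp, Real.log_prod (fun j _ => (hpos i j).ne')]
    congr 1
    simp only [hmdef, hLdef]
    ring
  constructor
  · intro h
    -- apply h to y = exp m
    have hy : ∀ j : Fin n, 0 < Real.exp (m j) := fun j => Real.exp_pos _
    have h1 := h (fun j => Real.exp (m j)) hy
    rw [glog x hx, glog _ hy] at h1
    simp only [Real.log_exp] at h1
    set v : Fin n → ℝ := fun i => Real.log (x i) with hvdef
    have hkeyv := key v
    have hS : ∑ i, ∑ j, ((v i - m i) - (v j - m j)) ^ 2 = 0 := by
      have hnonneg : 0 ≤ ∑ i, ∑ j, ((v i - m i) - (v j - m j)) ^ 2 := by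
        positivity
      nlinarith [hkeyv, h1]
    have hzero : ∀ i j : Fin n, ((v i - m i) - (v j - m j)) ^ 2 = 0 := by
      intro i j
      have h2 := (Finset.sum_eq_zero_iff_of_nonneg
        (fun i _ => Finset.sum_nonneg (fun j _ => sq_nonneg _))).mp hS i (Finset.mem_univ i)
      exact (Finset.sum_eq_zero_iff_of_nonneg
        (fun j _ => sq_nonneg _)).mp h2 j (Finset.mem_univ j)
    have i0 : Fin n := ⟨0, by omega⟩
    refine ⟨Real.exp (v i0 - m i0), Real.exp_pos _, ?_⟩
    intro i
    have hd : v i - m i = v i0 - m i0 := by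
      have := hzero i i0
      have := sq_eq_zero_iff.mp this
      linarith
    have hx' : x i = Real.exp (v i) := (Real.exp_log (hx i)).symm
    rw [hx', ← hexp i, ← Real.exp_add]
    congr 1
    linarith
  · rintro ⟨u, hu, hxu⟩ y hy
    rw [glog x hx, glog y hy]
    have hvx : ∀ i, Real.log (x i) = Real.log u + m i := by
      intro i
      rw [hxu i, Real.log_mul hu.ne' (Real.rpow_pos_of_pos (Finset.prod_pos fun j _ => hpos i j) _).ne', ← hexp i, Real.log_exp]
    have h1 := key (fun i => Real.log (x i))
    have h2 := key (fun i => Real.log (y i))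
    simp only [hvx] at h1
    have hz : ∑ i, ∑ j, ((Real.log u + m i - m i) - (Real.log u + m j - m j)) ^ 2 = 0 := by
      apply Finset.sum_eq_zero; intro i _
      apply Finset.sum_eq_zero; intro j _
      ring_nf
    have hnn : 0 ≤ ∑ i, ∑ j,
        ((Real.log (y i) - m i) - (Real.log (y j) - m j)) ^ 2 := by positivity
    calc ∑ i, ∑ j, (L i j - (Real.log (x i) - Real.log (x j))) ^ 2
        = ∑ i, ∑ j, (L i j - (m i - m j)) ^ 2 := by
          have : ∀ i j : Fin n, (L i j - (Real.log (x i) - Real.log (x j))) ^ 2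
              = (L i j - (m i - m j)) ^ 2 := by
            intro i j; rw [hvx i, hvx j]; ring_nf
          simp only [this]
      _ ≤ ∑ i, ∑ j, (L i j - (Real.log (y i) - Real.log (y j))) ^ 2 := by
          rw [h2]; linarith
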